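/- Let q be a prime power and f a monic polynomial in 𝔽_q[T]. Then for every ε > 0 and every integer d ≥ 1, the number of squarefree monic polynomials F of degree d with gcd(F, f) = 1 equals ∏_{P | f} (1 + 1/|P|)^{−1} · |𝓗(d)| + O_ε( |f|^ε · q^{εd} ), where the product runs over monic irreducibles P dividing f and |𝓗(d)| = q^d − q^{d−1}. -/

import Mathlib

open Polynomial Finset Filter
open scoped Classical

noncomputable section

/-- The monic polynomial `X^n + ∑_{i<n} c i · X^i`; as `c` ranges over `Fin n → Fq`
this parametrizes the monic polynomials of degree `n` over `Fq`. -/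
def monicOf {Fq : Type} [Field Fq] (n : ℕ) (c : Fin n → Fq) : Polynomial Fq :=
  X ^ n + ∑ i : Fin n, C (c i) * X ^ (i : ℕ)

/-- Sum of `φ` over the monic polynomials of degree `n` in `Fq[T]`. -/
def sumMonic {Fq : Type} [Field Fq] [Fintype Fq] (n : ℕ) (φ : Polynomial Fq → ℂ) : ℂ :=
  ∑ c : Fin n → Fq, φ (monicOf n c)

/-- Sum of `φ` over the squarefree monic polynomials of degree `n` in `Fq[T]`. -/
def sumSqfree {Fq : Type} [Field Fq] [Fintype Fq] (n : ℕ) (φ : Polynomial Fq → ℂ) : ℂ :=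
  ∑ c : Fin n → Fq, if Squarefree (monicOf n c) then φ (monicOf n c) else 0

/-- `L(s,χ) = ∑_{F monic} χ(F)|F|^{-s}`, grouped by degree.  For the characters in this
paper the coefficient sums vanish in large degree, so this is a finite sum giving the
analytic continuation of the Dirichlet series. -/
def Lval {Fq : Type} [Field Fq] [Fintype Fq] (q : ℕ) (s : ℝ) (χ : Polynomial Fq → ℂ) : ℂ :=
  ∑' n : ℕ, sumMonic n χ * ((q : ℝ) ^ (-s * (n : ℝ)) : ℝ)

/-- `𝓛(u,χ) = ∑_{F monic} χ(F) u^{deg F}`, grouped by degree. -/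
def Lu {Fq : Type} [Field Fq] [Fintype Fq] (u : ℂ) (χ : Polynomial Fq → ℂ) : ℂ :=
  ∑' n : ℕ, sumMonic n χ * u ^ n

/-- `chi` is the family of cubic residue symbols `chi F = χ_F` on `Fq[T]` determined by the
isomorphism `Ω` from the cube roots of unity of `Fq^*` to `μ₃ ⊂ ℂ^*`. -/
structure IsCubicSymbol (q : ℕ) {Fq : Type} [Field Fq] [Fintype Fq]
    (Ω : Fq → ℂ) (chi : Polynomial Fq → Polynomial Fq → ℂ) : Prop where
  omega_mul : ∀ a b : Fq, a ^ 3 = 1 → b ^ 3 = 1 → Ω (a * b) = Ω a * Ω b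
  omega_cube : ∀ a : Fq, a ^ 3 = 1 → (Ω a) ^ 3 = 1
  omega_inj : ∀ a b : Fq, a ^ 3 = 1 → b ^ 3 = 1 → Ω a = Ω b → a = b
  omega_surj : ∀ z : ℂ, z ^ 3 = 1 → ∃ a : Fq, a ^ 3 = 1 ∧ Ω a = z
  chi_one : ∀ a : Polynomial Fq, chi 1 a = 1
  chi_mul_left : ∀ F G a : Polynomial Fq, F.Monic → G.Monic →
    chi (F * G) a = chi F a * chi G a
  chi_prime_dvd : ∀ P a : Polynomial Fq, P.Monic → Irreducible P → P ∣ a → chi P a = 0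
  chi_prime_not_dvd : ∀ P a : Polynomial Fq, P.Monic → Irreducible P → ¬ P ∣ a →
    ∃ c : Fq, c ^ 3 = 1 ∧ Ω c = chi P a ∧ P ∣ (a ^ ((q ^ P.natDegree - 1) / 3) - C c)

/-- The monic irreducible polynomials over `Fq`. -/
def MonicIrred (Fq : Type) [Field Fq] : Type := {P : Polynomial Fq // P.Monic ∧ Irreducible P}

/-- `|P| = q^{deg P}` as a real number. -/
def normP {Fq : Type} [Field Fq] (q : ℕ) (P : MonicIrred Fq) : ℝ := (q : ℝ) ^ P.1.natDegree

/-- `C_q = ∏_P (1 - 1/(|P|(|P|+1)))`. -/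
def Cq (q : ℕ) (Fq : Type) [Field Fq] : ℝ :=
  ∏' P : MonicIrred Fq, (1 - (normP q P * (normP q P + 1))⁻¹)

/-- `M_q(s) = ζ_q(3s) ∏_P (1 - |P|^{-3s}/(|P|+1))`. -/
def Mq (q : ℕ) (Fq : Type) [Field Fq] (s : ℝ) : ℝ :=
  (1 - (q : ℝ) ^ (1 - 3 * s))⁻¹ *
    ∏' P : MonicIrred Fq, (1 - (normP q P) ^ (-3 * s) * (normP q P + 1)⁻¹)


namespace CSC
variable {Fq : Type} [Field Fq]

lemma monicOf_monic (n : ℕ) (c : Fin n → Fq) : (monicOf n c).Monic := by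
  apply (monic_X_pow n).add_of_left
  refine lt_of_le_of_lt (degree_sum_le _ _) ?_
  rw [degree_X_pow, Finset.sup_lt_iff (by exact_mod_cast WithBot.bot_lt_coe n)]
  intro i _
  refine lt_of_le_of_lt (degree_C_mul_X_pow_le _ _) ?_
  exact_mod_cast i.2

lemma monicOf_natDegree (n : ℕ) (c : Fin n → Fq) : (monicOf n c).natDegree = n := by
  have h : degree (∑ i : Fin n, C (c i) * X ^ (i : ℕ)) < degree ((X : Polynomial Fq) ^ n) := by
    refine lt_of_le_of_lt (degree_sum_le _ _) ?_
    rw [degree_X_pow, Finset.sup_lt_iff (by exact_mod_cast WithBot.bot_lt_coe n)]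
    intro i _
    refine lt_of_le_of_lt (degree_C_mul_X_pow_le _ _) ?_
    exact_mod_cast i.2
  have := degree_add_eq_left_of_degree_lt h
  rw [monicOf] at *
  rw [natDegree, this, degree_X_pow]; rfl

lemma monicOf_coeff_lt (n : ℕ) (c : Fin n → Fq) (k : ℕ) (hk : k < n) :
    (monicOf n c).coeff k = c ⟨k, hk⟩ := by
  rw [monicOf, coeff_add, coeff_X_pow, if_neg (Nat.ne_of_lt hk), zero_add, finset_sum_coeff]
  rw [Finset.sum_eq_single (⟨k, hk⟩ : Fin n)]
  · simp
  · intro b _ hb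
    simp only [coeff_C_mul, coeff_X_pow]
    rw [if_neg, mul_zero]
    intro h; exact hb (by ext; simp [h])
  · simp

end CSC
namespace CSC
variable {Fq : Type} [Field Fq]

lemma monicOf_injective (n : ℕ) : Function.Injective (monicOf (Fq := Fq) n) := by
  intro c₁ c₂ h
  funext i
  have := congrArg (fun p => Polynomial.coeff p (i : ℕ)) h
  simpa [monicOf_coeff_lt n _ _ i.2] using this

lemma eq_monicOf_of_monic {F : Polynomial Fq} {n : ℕ} (hF : F.Monic) (hd : F.natDegree = n) :
    F = monicOf n (fun i => F.coeff i) := by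
  ext k
  rcases lt_trichotomy k n with hk | hk | hk
  · rw [monicOf_coeff_lt n _ k hk]
  · have h1 : F.coeff k = 1 := by rw [hk, ← hd]; exact hF.coeff_natDegree
    have h2 := (monicOf_monic n (fun i : Fin n => F.coeff i)).coeff_natDegree
    rw [monicOf_natDegree] at h2
    rw [h1, hk, h2]
  · rw [coeff_eq_zero_of_natDegree_lt (by omega),
      coeff_eq_zero_of_natDegree_lt (by rw [monicOf_natDegree]; omega)]

variable [Fintype Fq]

/-- The finset of monic polynomials of degree `n`. -/
def Mon (Fq : Type) [Field Fq] [Fintype Fq] (n : ℕ) : Finset (Polynomial Fq) :=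
  (Finset.univ : Finset (Fin n → Fq)).image (monicOf n)

lemma mem_Mon {F : Polynomial Fq} {n : ℕ} :
    F ∈ Mon Fq n ↔ F.Monic ∧ F.natDegree = n := by
  constructor
  · rintro h
    rw [Mon, Finset.mem_image] at h
    obtain ⟨c, -, rfl⟩ := h
    exact ⟨monicOf_monic n c, monicOf_natDegree n c⟩
  · rintro ⟨h1, h2⟩
    rw [Mon, Finset.mem_image]
    exact ⟨fun i => F.coeff i, Finset.mem_univ _, (eq_monicOf_of_monic h1 h2).symm⟩

lemma card_Mon (n : ℕ) : (Mon Fq n).card = Fintype.card Fq ^ n := by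
  rw [Mon, Finset.card_image_of_injective _ (monicOf_injective n), Finset.card_univ]
  simp

end CSC
namespace CSC
variable {Fq : Type} [Field Fq]

lemma irred_natDegree_pos {P : Polynomial Fq} (h : Irreducible P) : 0 < P.natDegree := by
  rcases Nat.eq_zero_or_pos P.natDegree with h0 | h0
  · obtain ⟨a, rfl⟩ := Polynomial.natDegree_eq_zero.mp h0
    have ha : a ≠ 0 := by rintro rfl; rw [map_zero] at h; exact not_irreducible_zero h
    exact absurd (isUnit_C.mpr (isUnit_iff_ne_zero.mpr ha)) h.not_isUnit
  · exact h0

lemma exists_monic_irred_sq_dvd {F : Polynomial Fq} (hF : F.Monic) (h : ¬ Squarefree F) :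
    ∃ P : Polynomial Fq, P.Monic ∧ Irreducible P ∧ P ^ 2 ∣ F := by
  rw [Squarefree] at h; push_neg at h
  obtain ⟨x, hxd, hxu⟩ := h
  have hx0 : x ≠ 0 := by
    rintro rfl
    exact hF.ne_zero (by simpa using hxd)
  obtain ⟨p, hp, hpx⟩ := WfDvdMonoid.exists_irreducible_factor hxu hx0
  have hu : IsUnit (C p.leadingCoeff⁻¹) :=
    isUnit_C.mpr (isUnit_iff_ne_zero.mpr (inv_ne_zero (leadingCoeff_ne_zero.mpr hp.ne_zero)))
  refine ⟨p * C p.leadingCoeff⁻¹, monic_mul_leadingCoeff_inv hp.ne_zero, ?_, ?_⟩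
  · exact (irreducible_mul_isUnit hu).mpr hp
  · have hassoc : Associated p (p * C p.leadingCoeff⁻¹) := associated_mul_unit_right _ _ hu
    have h1 : (p * C p.leadingCoeff⁻¹) ^ 2 ∣ x * x := by
      refine ((hassoc.pow_pow (n := 2)).symm.dvd).trans ?_
      rw [pow_two]
      exact mul_dvd_mul hpx hpx
    exact h1.trans hxd

end CSC
namespace CSC
variable {Fq : Type} [Field Fq]

lemma exists_sq_decomp : ∀ (n : ℕ) (F : Polynomial Fq), F.Monic → F.natDegree = n →
    ∃ Cp S : Polynomial Fq, Cp.Monic ∧ S.Monic ∧ Squarefree S ∧ F = Cp ^ 2 * S := by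
  intro n
  induction n using Nat.strong_induction_on with
  | _ n ih =>
    intro F hF hd
    by_cases hsf : Squarefree F
    · exact ⟨1, F, monic_one, hF, hsf, by ring⟩
    · obtain ⟨P, hPm, hPirr, hPdvd⟩ := exists_monic_irred_sq_dvd hF hsf
      obtain ⟨G, hG⟩ := hPdvd
      have hP2m : (P ^ 2).Monic := hPm.pow 2
      have hGm : G.Monic := hP2m.of_mul_monic_left (hG ▸ hF)
      have hdeg : G.natDegree < n := by
        have h1 : F.natDegree = (P ^ 2).natDegree + G.natDegree := by
          rw [hG, Polynomial.natDegree_mul hP2m.ne_zero hGm.ne_zero]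
        have h2 : (P ^ 2).natDegree = 2 * P.natDegree := by
          rw [Polynomial.natDegree_pow]
        have := irred_natDegree_pos hPirr
        omega
      obtain ⟨Cp, S, h1, h2, h3, h4⟩ := ih G.natDegree hdeg G hGm rfl
      exact ⟨P * Cp, S, hPm.mul h1, h2, h3, by rw [hG, h4]; ring⟩

open UniqueFactorizationMonoid in
lemma sq_decomp_inj {C₁ C₂ S₁ S₂ : Polynomial Fq} (hC₁ : C₁.Monic) (hC₂ : C₂.Monic)
    (hS₁ : S₁.Monic) (hS₂ : S₂.Monic) (hq₁ : Squarefree S₁) (hq₂ : Squarefree S₂)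
    (h : C₁ ^ 2 * S₁ = C₂ ^ 2 * S₂) : C₁ = C₂ ∧ S₁ = S₂ := by
  have hc10 := hC₁.ne_zero
  have hc20 := hC₂.ne_zero
  have key : C₁ = C₂ := by
    have hnf : normalizedFactors (C₁ ^ 2 * S₁) = normalizedFactors (C₂ ^ 2 * S₂) := by rw [h]
    rw [normalizedFactors_mul (pow_ne_zero _ hc10) hS₁.ne_zero,
      normalizedFactors_mul (pow_ne_zero _ hc20) hS₂.ne_zero,
      normalizedFactors_pow, normalizedFactors_pow] at hnf
    have hcount : normalizedFactors C₁ = normalizedFactors C₂ := by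
      ext a
      have hc := congrArg (Multiset.count a) hnf
      simp only [Multiset.count_add, Multiset.count_nsmul] at hc
      have n₁ : Multiset.count a (normalizedFactors S₁) ≤ 1 :=
        Multiset.nodup_iff_count_le_one.mp
          ((squarefree_iff_nodup_normalizedFactors hS₁.ne_zero).mp hq₁) a
      have n₂ : Multiset.count a (normalizedFactors S₂) ≤ 1 :=
        Multiset.nodup_iff_count_le_one.mp
          ((squarefree_iff_nodup_normalizedFactors hS₂.ne_zero).mp hq₂) a
      omega
    have hassoc : Associated C₁ C₂ :=
      (prod_normalizedFactors hc10).symm.trans (hcount ▸ prod_normalizedFactors hc20)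
    exact eq_of_monic_of_associated hC₁ hC₂ hassoc
  subst key
  exact ⟨rfl, mul_left_cancel₀ (pow_ne_zero 2 hc10) h⟩

end CSC
namespace CSC
variable {Fq : Type} [Field Fq] [Fintype Fq]

/-- Squarefree monic polynomials of degree `n`. -/
def sfM (Fq : Type) [Field Fq] [Fintype Fq] (n : ℕ) : Finset (Polynomial Fq) :=
  (Mon Fq n).filter Squarefree

lemma Mon_eq_biUnion (n : ℕ) :
    Mon Fq n = (Finset.range (n / 2 + 1)).biUnion
      (fun j => ((Mon Fq j) ×ˢ (sfM Fq (n - 2 * j))).image (fun p => p.1 ^ 2 * p.2)) := by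
  ext F
  simp only [Finset.mem_biUnion, Finset.mem_range, Finset.mem_image, Finset.mem_product,
    mem_Mon, sfM, Finset.mem_filter, Prod.exists]
  constructor
  · rintro ⟨hFm, rfl⟩
    obtain ⟨Cp, S, h1, h2, h3, h4⟩ := exists_sq_decomp F.natDegree F hFm rfl
    have hdeg : F.natDegree = 2 * Cp.natDegree + S.natDegree := by
      rw [h4, Polynomial.natDegree_mul (pow_ne_zero _ h1.ne_zero) h2.ne_zero,
        Polynomial.natDegree_pow]
    exact ⟨Cp.natDegree, by omega, Cp, S, ⟨⟨h1, rfl⟩, ⟨⟨h2, by omega⟩, h3⟩⟩, h4.symm⟩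
  · rintro ⟨j, hj, Cp, S, ⟨⟨h1, rfl⟩, ⟨⟨h2, hS⟩, h3⟩⟩, rfl⟩
    refine ⟨(h1.pow 2).mul h2, ?_⟩
    rw [Polynomial.natDegree_mul (pow_ne_zero _ h1.ne_zero) h2.ne_zero,
      Polynomial.natDegree_pow, hS]
    omega

lemma card_Mon_eq_sum (n : ℕ) :
    (Mon Fq n).card =
      ∑ j ∈ Finset.range (n / 2 + 1), (Mon Fq j).card * (sfM Fq (n - 2 * j)).card := by
  rw [Mon_eq_biUnion n, Finset.card_biUnion]
  · refine Finset.sum_congr rfl fun j _ => ?_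
    rw [Finset.card_image_of_injOn, Finset.card_product]
    rintro ⟨C₁, S₁⟩ h₁ ⟨C₂, S₂⟩ h₂ hEq
    simp only [Finset.mem_product, mem_Mon, sfM, Finset.mem_filter, Finset.mem_coe] at h₁ h₂
    obtain ⟨hc, hs⟩ := sq_decomp_inj h₁.1.1 h₂.1.1 h₁.2.1.1 h₂.2.1.1 h₁.2.2 h₂.2.2 hEq
    simp [hc, hs, Prod.ext_iff]
  · intro j₁ _ j₂ _ hne
    simp only [Finset.disjoint_left, Finset.mem_image, Finset.mem_product, Prod.exists]
    rintro F ⟨C₁, S₁, h₁, rfl⟩ ⟨C₂, S₂, h₂, hEq⟩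
    simp only [Finset.mem_product, mem_Mon, sfM, Finset.mem_filter] at h₁ h₂
    obtain ⟨hc, -⟩ := sq_decomp_inj h₂.1.1 h₁.1.1 h₂.2.1.1 h₁.2.1.1 h₂.2.2 h₁.2.2 hEq
    exact hne (by rw [← h₁.1.2, ← h₂.1.2, hc])

end CSC
namespace CSC
variable {Fq : Type} [Field Fq] [Fintype Fq]

lemma eq_one_of_mem_Mon_zero {F : Polynomial Fq} (h : F ∈ Mon Fq 0) : F = 1 := by
  rw [mem_Mon] at h
  exact h.1.natDegree_eq_zero.mp h.2

lemma sfM_zero : sfM Fq 0 = Mon Fq 0 := by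
  rw [sfM, Finset.filter_eq_self]
  intro F hF
  rw [eq_one_of_mem_Mon_zero hF]
  exact squarefree_one

lemma sfM_one : sfM Fq 1 = Mon Fq 1 := by
  rw [sfM, Finset.filter_eq_self]
  intro F hF
  rw [mem_Mon] at hF
  have : F.degree = 1 := by
    rw [Polynomial.degree_eq_natDegree hF.1.ne_zero, hF.2]
    rfl
  exact (Polynomial.irreducible_of_degree_eq_one this).squarefree

lemma card_sfM (n : ℕ) (hn : 2 ≤ n) :
    (sfM Fq n).card + Fintype.card Fq ^ (n - 1) = Fintype.card Fq ^ n := by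
  have I := fun m => (card_Mon_eq_sum (Fq := Fq) m).symm
  simp only [card_Mon] at I
  have h1 := I n
  rw [Finset.sum_range_succ'] at h1
  have h2 : ∑ j ∈ Finset.range (n / 2), Fintype.card Fq ^ (j + 1) * (sfM Fq (n - 2 * (j + 1))).card
      = Fintype.card Fq ^ (n - 1) := by
    have hrange : n / 2 = (n - 2) / 2 + 1 := by omega
    rw [hrange]
    calc ∑ j ∈ Finset.range ((n - 2) / 2 + 1),
          Fintype.card Fq ^ (j + 1) * (sfM Fq (n - 2 * (j + 1))).card
        = Fintype.card Fq * ∑ j ∈ Finset.range ((n - 2) / 2 + 1),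
            Fintype.card Fq ^ j * (sfM Fq ((n - 2) - 2 * j)).card := by
          rw [Finset.mul_sum]
          refine Finset.sum_congr rfl fun j _ => ?_
          rw [pow_succ]
          have : n - 2 * (j + 1) = n - 2 - 2 * j := by omega
          rw [this]; ring
      _ = Fintype.card Fq * Fintype.card Fq ^ (n - 2) := by rw [← I (n - 2)]
      _ = Fintype.card Fq ^ (n - 1) := by
          rw [← pow_succ']
          congr 1
          omega
  rw [h2] at h1
  simp only [pow_zero, one_mul, Nat.mul_zero, Nat.sub_zero] at h1
  omega

end CSC
namespace CSC
variable {Fq : Type} [Field Fq]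

lemma monic_irred_dvd_irred {P Q : Polynomial Fq} (hQm : Q.Monic) (hQirr : Irreducible Q)
    (hPm : P.Monic) (hPirr : Irreducible P) (h : Q ∣ P) : Q = P := by
  obtain ⟨c, hc⟩ := h
  rcases hPirr.isUnit_or_isUnit hc with hu | hu
  · exact absurd hu hQirr.not_isUnit
  · exact eq_of_monic_of_associated hQm hPm ⟨hu.unit, by rw [hc]; simp⟩

variable [Fintype Fq]

/-- Squarefree monic polynomials of degree `n` avoiding all (irreducible) elements of `S`. -/
def NS (S : Finset (Polynomial Fq)) (n : ℕ) : Finset (Polynomial Fq) :=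
  (Mon Fq n).filter (fun F => Squarefree F ∧ ∀ P ∈ S, ¬ P ∣ F)

lemma NS_empty (n : ℕ) : NS (∅ : Finset (Polynomial Fq)) n = sfM Fq n := by
  simp [NS, sfM]

lemma NS_card_rec {S : Finset (Polynomial Fq)} (hS : ∀ Q ∈ S, Q.Monic ∧ Irreducible Q)
    {P : Polynomial Fq} (hPm : P.Monic) (hPirr : Irreducible P) (hPS : P ∉ S) (n : ℕ) :
    (NS S n).card = (NS (insert P S) n).card +
      (if P.natDegree ≤ n then (NS (insert P S) (n - P.natDegree)).card else 0) := by
  classical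
  have hsplit := Finset.card_filter_add_card_filter_not
    (s := NS S n) (fun F => P ∣ F)
  have h1 : (NS S n).filter (fun F => ¬ P ∣ F) = NS (insert P S) n := by
    ext F
    simp only [NS, Finset.mem_filter, Finset.mem_insert]
    constructor
    · rintro ⟨⟨hm, hsf, hav⟩, hnd⟩
      exact ⟨hm, hsf, fun Q hQ => by rcases hQ with rfl | hQ; exact hnd; exact hav Q hQ⟩
    · rintro ⟨hm, hsf, hav⟩
      exact ⟨⟨hm, hsf, fun Q hQ => hav Q (Or.inr hQ)⟩, hav P (Or.inl rfl)⟩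
  have h2 : ((NS S n).filter (fun F => P ∣ F)).card =
      (if P.natDegree ≤ n then (NS (insert P S) (n - P.natDegree)).card else 0) := by
    split_ifs with he
    · have himg : (NS S n).filter (fun F => P ∣ F) =
          (NS (insert P S) (n - P.natDegree)).image (fun G => P * G) := by
        ext F
        simp only [NS, Finset.mem_filter, Finset.mem_image, mem_Mon, Finset.mem_insert]
        constructor
        · rintro ⟨⟨⟨hm, hdeg⟩, hsf, hav⟩, G, rfl⟩
          have hGm : G.Monic := hPm.of_mul_monic_left hm
          refine ⟨G, ⟨⟨hGm, ?_⟩, hsf.squarefree_of_dvd (Dvd.intro_left P rfl), ?_⟩, rfl⟩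
          · rw [Polynomial.natDegree_mul hPm.ne_zero hGm.ne_zero] at hdeg
            omega
          · rintro Q (rfl | hQ) hdvd
            · exact hPirr.not_isUnit (hsf Q (mul_dvd_mul_left Q hdvd))
            · exact hav Q hQ (hdvd.trans (Dvd.intro_left P rfl))
        · rintro ⟨G, ⟨⟨hGm, hGdeg⟩, hGsf, hGav⟩, rfl⟩
          have hPG : ¬ P ∣ G := hGav P (Or.inl rfl)
          refine ⟨⟨⟨hPm.mul hGm, ?_⟩, ?_, ?_⟩, Dvd.intro G rfl⟩
          · rw [Polynomial.natDegree_mul hPm.ne_zero hGm.ne_zero, hGdeg]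
            omega
          · exact squarefree_mul_iff.mpr
              ⟨hPirr.isRelPrime_iff_not_dvd.mpr hPG, hPirr.squarefree, hGsf⟩
          · intro Q hQ hdvd
            obtain ⟨hQm, hQirr⟩ := hS Q hQ
            rcases (UniqueFactorizationMonoid.irreducible_iff_prime.mp hQirr).2.2
                P G hdvd with hd | hd
            · exact hPS ((monic_irred_dvd_irred hQm hQirr hPm hPirr hd) ▸ hQ)
            · exact hGav Q (Or.inr hQ) hd
      rw [himg, Finset.card_image_of_injective _ (mul_right_injective₀ hPm.ne_zero)]
    · rw [Finset.card_eq_zero, Finset.filter_eq_empty_iff]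
      rintro F hF hdvd
      rw [NS, Finset.mem_filter, mem_Mon] at hF
      exact he ((Polynomial.natDegree_le_of_dvd hdvd hF.1.1.ne_zero).trans hF.1.2.le)
  rw [← h2, ← h1]
  omega

/-- The count, with degree in `ℤ`. -/
def NZ (S : Finset (Polynomial Fq)) (d : ℤ) : ℕ :=
  if 0 ≤ d then (NS S d.toNat).card else 0

lemma NZ_rec {S : Finset (Polynomial Fq)} (hS : ∀ Q ∈ S, Q.Monic ∧ Irreducible Q)
    {P : Polynomial Fq} (hPm : P.Monic) (hPirr : Irreducible P) (hPS : P ∉ S) (d : ℤ) :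
    NZ S d = NZ (insert P S) d + NZ (insert P S) (d - P.natDegree) := by
  have e1 := irred_natDegree_pos hPirr
  by_cases hd : 0 ≤ d
  · have hrec := NS_card_rec hS hPm hPirr hPS d.toNat
    by_cases h3 : (P.natDegree : ℤ) ≤ d
    · have ht : (d - P.natDegree).toNat = d.toNat - P.natDegree := by omega
      have hp : P.natDegree ≤ d.toNat := by omega
      rw [if_pos hp] at hrec
      simp only [NZ, if_pos hd, if_pos (by omega : (0:ℤ) ≤ d - P.natDegree), ht]
      exact hrec
    · rw [if_neg (by omega)] at hrec
      simp only [NZ, if_pos hd, if_neg (by omega : ¬ (0:ℤ) ≤ d - P.natDegree)]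
      omega
  · simp only [NZ, if_neg hd, if_neg (by omega : ¬ (0:ℤ) ≤ d - P.natDegree)]

end CSC
namespace CSC
variable {Fq : Type} [Field Fq] [Fintype Fq]

/-- Main term. -/
def MT (q : ℝ) (S : Finset (Polynomial Fq)) (d : ℤ) : ℝ :=
  (q ^ d - q ^ (d - 1)) * ∏ P ∈ S, (1 + (q ^ P.natDegree)⁻¹)⁻¹

/-- Product controlling the error. -/
def GS (q η : ℝ) (S : Finset (Polynomial Fq)) : ℝ :=
  ∏ P ∈ S, (1 - q ^ (-(η * P.natDegree)))⁻¹

section RealFacts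

variable {q η : ℝ}

lemma q_pos (hq : 2 ≤ q) : (0:ℝ) < q := lt_of_lt_of_le (by norm_num) hq
lemma q_one_lt (hq : 2 ≤ q) : (1:ℝ) < q := lt_of_lt_of_le (by norm_num) hq

lemma pi_pos (hq : 2 ≤ q) (S : Finset (Polynomial Fq)) :
    0 < ∏ P ∈ S, (1 + (q ^ P.natDegree)⁻¹)⁻¹ := by
  apply Finset.prod_pos
  intro P _
  have : (0:ℝ) < q ^ P.natDegree := pow_pos (q_pos hq) _
  positivity

lemma pi_le_one (hq : 2 ≤ q) (S : Finset (Polynomial Fq)) :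
    ∏ P ∈ S, (1 + (q ^ P.natDegree)⁻¹)⁻¹ ≤ 1 := by
  apply Finset.prod_le_one
  · intro P _
    have : (0:ℝ) < q ^ P.natDegree := pow_pos (q_pos hq) _
    positivity
  · intro P _
    rw [inv_le_one_iff₀]
    right
    have : (0:ℝ) < (q ^ P.natDegree)⁻¹ := by
      have : (0:ℝ) < q ^ P.natDegree := pow_pos (q_pos hq) _
      positivity
    linarith

lemma tP_pos (hq : 2 ≤ q) : ∀ x : ℝ, 0 < q ^ x := fun x => Real.rpow_pos_of_pos (q_pos hq) x

lemma tP_lt_one (hq : 2 ≤ q) (hη0 : 0 < η) {e : ℕ} (he : 1 ≤ e) : q ^ (-(η * e)) < 1 := by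
  apply Real.rpow_lt_one_of_one_lt_of_neg (q_one_lt hq)
  have h1 : (1:ℝ) ≤ (e:ℝ) := by exact_mod_cast he
  nlinarith

lemma GS_factor_ge_one (hq : 2 ≤ q) (hη0 : 0 < η) {e : ℕ} (he : 1 ≤ e) :
    1 ≤ (1 - q ^ (-(η * e)))⁻¹ := by
  rw [le_inv_comm₀]
  · linarith [tP_pos hq (-(η * (e:ℕ)))]
  · norm_num
  · linarith [tP_lt_one hq hη0 (e := e) he]

lemma one_le_GS (hq : 2 ≤ q) (hη0 : 0 < η) (S : Finset (Polynomial Fq))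
    (hS : ∀ Q ∈ S, Q.Monic ∧ Irreducible Q) : 1 ≤ GS q η S := by
  rw [GS]
  calc (1:ℝ) = ∏ _P ∈ S, 1 := by simp
    _ ≤ ∏ P ∈ S, (1 - q ^ (-(η * P.natDegree)))⁻¹ := by
        apply Finset.prod_le_prod (fun _ _ => zero_le_one)
        intro P hP
        exact GS_factor_ge_one hq hη0 (irred_natDegree_pos (hS P hP).2)

lemma GS_pos (hq : 2 ≤ q) (hη0 : 0 < η) (S : Finset (Polynomial Fq))
    (hS : ∀ Q ∈ S, Q.Monic ∧ Irreducible Q) : 0 < GS q η S :=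
  lt_of_lt_of_le one_pos (one_le_GS hq hη0 S hS)

lemma MT_abs_le (hq : 2 ≤ q) (S : Finset (Polynomial Fq)) (d : ℤ) :
    |MT q S d| ≤ q ^ (d : ℝ) := by
  have hq0 := q_pos hq
  have h2 : (0:ℝ) < q ^ (d-1) := zpow_pos hq0 _
  have h2' : (0:ℝ) < q ^ d := zpow_pos hq0 _
  have h1 : q ^ (d-1) ≤ q ^ d := zpow_le_zpow_right₀ (by linarith) (by omega)
  have hpi0 := pi_pos (Fq := Fq) hq S
  have hpi1 := pi_le_one (Fq := Fq) hq S
  have habs : |MT q S d| = (q ^ d - q ^ (d-1)) * ∏ P ∈ S, (1 + (q ^ P.natDegree)⁻¹)⁻¹ := by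
    rw [MT, abs_of_nonneg]
    apply mul_nonneg (by linarith) (le_of_lt hpi0)
  rw [habs, Real.rpow_intCast]
  nlinarith

lemma rpow_mono (hq : 2 ≤ q) {a b : ℝ} (hab : a ≤ b) : q ^ a ≤ q ^ b :=
  (Real.rpow_le_rpow_left_iff (q_one_lt hq)).mpr hab

end RealFacts
end CSC
namespace CSC
variable {Fq : Type} [Field Fq] [Fintype Fq]
variable {q η : ℝ}

lemma MT_rec (hq : 2 ≤ q) {S : Finset (Polynomial Fq)} {P : Polynomial Fq}
    (hPirr : Irreducible P) (hPS : P ∉ S) (d : ℤ) :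
    MT q S d = MT q (insert P S) d + MT q (insert P S) (d - P.natDegree) := by
  have hq0 := q_pos hq
  have hq0' : q ≠ 0 := ne_of_gt hq0
  set e := P.natDegree with he
  have ha0 : (0:ℝ) < q ^ e := pow_pos hq0 _
  rw [MT, MT, MT, Finset.prod_insert hPS]
  set π := ∏ Q ∈ S, (1 + (q ^ Q.natDegree)⁻¹)⁻¹ with hπ
  set y := q ^ (d - (e:ℤ) - 1) with hy
  have hy1 : q ^ (d - 1) = y * q ^ e := by
    rw [hy, ← zpow_natCast q e, ← zpow_add₀ hq0']
    congr 1
    ring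
  have hy2 : q ^ d = y * q ^ e * q := by
    rw [hy, ← zpow_natCast q e, ← zpow_add₀ hq0', ← zpow_add_one₀ hq0']
    congr 1
    ring
  have hy3 : q ^ (d - (e:ℤ)) = y * q := by
    rw [hy, ← zpow_add_one₀ hq0']
    congr 1
    ring
  have hy4 : q ^ (d - (e:ℤ) - 1) = y := rfl
  rw [hy1, hy2, hy3]
  have hne : (1 + (q ^ e)⁻¹) ≠ 0 := by positivity
  field_simp
  ring

lemma neg_case (hq : 2 ≤ q) (hη0 : 0 < η) (hη1 : η ≤ 1)
    (S : Finset (Polynomial Fq)) (hS : ∀ Q ∈ S, Q.Monic ∧ Irreducible Q)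
    {d : ℤ} (hd : d < 0) :
    |(NZ S d : ℝ) - MT q S d| ≤ q ^ (η * d) * GS q η S := by
  have h0 : NZ S d = 0 := by rw [NZ, if_neg (by omega)]
  rw [h0, Nat.cast_zero]
  have h1 : |(0:ℝ) - MT q S d| = |MT q S d| := by rw [zero_sub, abs_neg]
  rw [h1]
  have h2 : |MT q S d| ≤ q ^ (d:ℝ) := MT_abs_le hq S d
  have h3 : q ^ (d:ℝ) ≤ q ^ (η * d) := by
    apply rpow_mono hq
    have : (d:ℝ) < 0 := by exact_mod_cast hd
    nlinarith
  calc |MT q S d| ≤ q ^ (η * d) := le_trans h2 h3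
    _ = q ^ (η * d) * 1 := by rw [mul_one]
    _ ≤ q ^ (η * d) * GS q η S := by
        apply mul_le_mul_of_nonneg_left (one_le_GS hq hη0 S hS) (le_of_lt (tP_pos hq _))

theorem key_bound (hq : 2 ≤ q) (hη0 : 0 < η) (hη1 : η ≤ 1)
    (hcard : q = (Fintype.card Fq : ℝ)) (S : Finset (Polynomial Fq)) :
    (∀ Q ∈ S, Q.Monic ∧ Irreducible Q) →
    ∀ d : ℤ, |(NZ S d : ℝ) - MT q S d| ≤ q ^ (η * d) * GS q η S := by
  have hq0 := q_pos hq
  induction S using Finset.induction_on with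
  | empty =>
    intro _ d
    rcases lt_or_ge d 0 with hd | hd
    · exact neg_case hq hη0 hη1 ∅ (by simp) hd
    · have hGS : GS q η (∅ : Finset (Polynomial Fq)) = 1 := by simp [GS]
      have hNZ : NZ (∅ : Finset (Polynomial Fq)) d = (sfM Fq d.toNat).card := by
        rw [NZ, if_pos hd, NS_empty]
      set n := d.toNat with hn
      have hdn : d = (n : ℤ) := by omega
      have hMT : MT q (∅ : Finset (Polynomial Fq)) d = q ^ d - q ^ (d - 1) := by
        rw [MT]; simp
      rcases Nat.lt_or_ge n 2 with h2 | h2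
      · interval_cases n
        · -- n = 0
          have hc : (sfM Fq 0).card = 1 := by
            rw [sfM_zero, card_Mon, pow_zero]
          rw [hNZ, hc, Nat.cast_one, hMT, hGS, hdn]
          have hzd : q ^ ((0:ℕ):ℤ) = 1 := by norm_num
          have hzd2 : q ^ (((0:ℕ):ℤ) - 1) = q⁻¹ := by norm_num
          rw [hzd, hzd2, mul_one]
          have : |(1:ℝ) - (1 - q⁻¹)| = q⁻¹ := by
            rw [abs_of_nonneg] <;> simp [inv_nonneg] <;> positivity
          rw [this]
          have h1 : q⁻¹ ≤ 1 := by
            rw [inv_le_one_iff₀]; right; linarith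
          have h2 : (1:ℝ) = q ^ (0:ℝ) := by rw [Real.rpow_zero]
          calc q⁻¹ ≤ 1 := h1
            _ = q ^ (0:ℝ) := h2
            _ ≤ q ^ (η * ((0:ℕ):ℤ)) := by
                apply rpow_mono hq
                simp
        · -- n = 1
          have hc : (sfM Fq 1).card = Fintype.card Fq := by
            rw [sfM_one, card_Mon, pow_one]
          rw [hNZ, hc, hMT, hGS, hdn, mul_one]
          have hzd : q ^ (((1:ℕ):ℤ)) = q := by norm_num
          have hzd2 : q ^ ((((1:ℕ)):ℤ) - 1) = 1 := by norm_num
          rw [hzd, hzd2, ← hcard]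
          have : |q - (q - 1)| = 1 := by
            rw [abs_of_nonneg] <;> ring_nf <;> norm_num
          rw [this]
          calc (1:ℝ) = q ^ (0:ℝ) := by rw [Real.rpow_zero]
            _ ≤ q ^ (η * ((1:ℕ):ℤ)) := by
                apply rpow_mono hq
                push_cast
                nlinarith
      · -- n ≥ 2
        have hcnat := card_sfM (Fq := Fq) n h2
        have hcast : ((sfM Fq n).card : ℝ) = q ^ n - q ^ (n - 1) := by
          have : ((sfM Fq n).card : ℝ) + q ^ (n-1) = q ^ n := by
            rw [hcard]
            exact_mod_cast congrArg (Nat.cast (R := ℝ)) hcnat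
          linarith
        rw [hNZ, hMT, hGS, hdn, mul_one]
        have hz1 : q ^ ((n:ℤ)) = q ^ n := by rw [zpow_natCast]
        have hz2 : q ^ ((n:ℤ) - 1) = q ^ (n - 1) := by
          rw [show (n:ℤ) - 1 = ((n - 1 : ℕ) : ℤ) by omega, zpow_natCast]
        rw [hz1, hz2, hcast]
        simp only [sub_self, abs_zero]
        positivity
  | @insert P S hPS ih =>
    intro hS' 
    have hS : ∀ Q ∈ S, Q.Monic ∧ Irreducible Q := fun Q hQ => hS' Q (Finset.mem_insert_of_mem hQ)
    obtain ⟨hPm, hPirr⟩ := hS' P (Finset.mem_insert_self P S)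
    have ihS := ih hS
    have e1 := irred_natDegree_pos hPirr
    set e := P.natDegree with he
    have ht0 : 0 < q ^ (-(η * e)) := tP_pos hq _
    have ht1 : q ^ (-(η * e)) < 1 := tP_lt_one hq hη0 e1
    have hsplitG : GS q η (insert P S) = (1 - q ^ (-(η * e)))⁻¹ * GS q η S := by
      rw [GS, GS, Finset.prod_insert hPS]
    suffices H : ∀ N : ℕ, ∀ d : ℤ, d < N →
        |(NZ (insert P S) d : ℝ) - MT q (insert P S) d| ≤ q ^ (η * d) * GS q η (insert P S) by
      intro d
      exact H (d.toNat + 1) d (by omega)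
    intro N
    induction N with
    | zero =>
      intro d hd
      exact neg_case hq hη0 hη1 _ hS' (by exact_mod_cast hd)
    | succ N ihN =>
      intro d hd
      by_cases hdn : d < N
      · exact ihN d hdn
      · have hrec := NZ_rec hS hPm hPirr hPS d
        have hmt := MT_rec hq hPirr hPS d
        have b1 := ihS d
        have b2 := ihN (d - e) (by omega)
        have step1 : |(NZ (insert P S) d : ℝ) - MT q (insert P S) d| ≤
            |(NZ S d : ℝ) - MT q S d| +
            |(NZ (insert P S) (d - e) : ℝ) - MT q (insert P S) (d - e)| := by
          have hrecR : (NZ S d : ℝ) =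
              (NZ (insert P S) d : ℝ) + (NZ (insert P S) (d - e) : ℝ) := by
            exact_mod_cast congrArg (Nat.cast (R := ℝ)) hrec
          have : (NZ (insert P S) d : ℝ) - MT q (insert P S) d =
              ((NZ S d : ℝ) - MT q S d) -
              ((NZ (insert P S) (d - e) : ℝ) - MT q (insert P S) (d - e)) := by
            rw [hrecR, hmt]; ring
          rw [this]
          exact abs_sub _ _
        have hexp : q ^ (η * ((d : ℝ) - e)) = q ^ (η * d) * q ^ (-(η * e)) := by
          rw [← Real.rpow_add hq0]
          congr 1
          ring
        have hcast2 : ((d - (e:ℕ) : ℤ) : ℝ) = (d : ℝ) - e := by push_cast; ring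
        have step2 : q ^ (η * ((d - (e:ℕ) : ℤ) : ℝ)) * GS q η (insert P S) =
            q ^ (η * d) * q ^ (-(η * e)) * GS q η (insert P S) := by
          rw [hcast2, hexp]
        have hfin : q ^ (η * d) * GS q η S +
            q ^ (η * d) * q ^ (-(η * e)) * GS q η (insert P S) =
            q ^ (η * d) * GS q η (insert P S) := by
          rw [hsplitG]
          have hne : (1:ℝ) - q ^ (-(η * e)) ≠ 0 := by linarith
          field_simp
          ring
        calc |(NZ (insert P S) d : ℝ) - MT q (insert P S) d|
            ≤ |(NZ S d : ℝ) - MT q S d| +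
              |(NZ (insert P S) (d - e) : ℝ) - MT q (insert P S) (d - e)| := step1
          _ ≤ q ^ (η * d) * GS q η S +
              q ^ (η * ((d - (e:ℕ) : ℤ) : ℝ)) * GS q η (insert P S) := add_le_add b1 b2
          _ = q ^ (η * d) * GS q η (insert P S) := by rw [step2, hfin]

end CSC
namespace CSCA

lemma inv_one_sub_le {t : ℝ} (h0 : 0 ≤ t) (h2 : t ≤ 1/2) : (1 - t)⁻¹ ≤ 1 + 2*t := by
  have h1 : 0 < 1 - t := by linarith
  have h3 : (1 - t)⁻¹ * (1 - t) = 1 := inv_mul_cancel₀ (ne_of_gt h1)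
  nlinarith [inv_pos.mpr h1, sq_nonneg t]

lemma rpow_ge_one_add {q x : ℝ} (hq : 0 < q) (hx : 0 ≤ x) :
    1 + x * Real.log q ≤ q ^ x := by
  rw [Real.rpow_def_of_pos hq]
  have := Real.add_one_le_exp (Real.log q * x)
  linarith [this]

/-- Per-factor bound: `(1 - q^{-ηe})⁻¹ ≤ q^{εe}`. -/
lemma factor_le {q ε η : ℝ} {e : ℕ} (hq : 2 ≤ q) (hε : 0 < ε) (he : 1 ≤ e)
    (ht2 : q ^ (-(η * e)) ≤ 1/2) (htb : 2 * q ^ (-(η * e)) ≤ ε * e * Real.log q) :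
    (1 - q ^ (-(η * e)))⁻¹ ≤ q ^ (ε * e) := by
  have hq0 : (0:ℝ) < q := by linarith
  have ht0 : (0:ℝ) ≤ q ^ (-(η * e)) := le_of_lt (Real.rpow_pos_of_pos hq0 _)
  have hε' : (0:ℝ) ≤ ε * e := by positivity
  calc (1 - q ^ (-(η * e)))⁻¹ ≤ 1 + 2 * q ^ (-(η * e)) := inv_one_sub_le ht0 ht2
    _ ≤ 1 + ε * e * Real.log q := by linarith
    _ ≤ q ^ (ε * e) := by
        have := rpow_ge_one_add hq0 hε'
        linarith

lemma rpow_base_le {a b x : ℝ} (ha : 0 < a) (hab : a ≤ b) (hx : x ≤ 0) :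
    b ^ x ≤ a ^ x :=
  Real.rpow_le_rpow_of_nonpos ha hab hx

lemma two_rpow_neg_nat (η : ℝ) (m : ℕ) : (2:ℝ) ^ (-(η * m)) = ((2:ℝ) ^ (-η)) ^ m := by
  rw [← Real.rpow_natCast ((2:ℝ) ^ (-η)) m, ← Real.rpow_mul (by norm_num)]
  congr 1
  ring

lemma two_rpow_neg_lt_one {η : ℝ} (hη : 0 < η) : (2:ℝ) ^ (-η) < 1 :=
  Real.rpow_lt_one_of_one_lt_of_neg one_lt_two (by linarith)

lemma exists_L {β η : ℝ} (hβ : 0 < β) (hη : 0 < η) :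
    ∃ L : ℕ, 1 ≤ L ∧ (2:ℝ) ^ (-(η * L)) ≤ β := by
  obtain ⟨n, hn⟩ := exists_pow_lt_of_lt_one hβ (two_rpow_neg_lt_one hη)
  have h0 : (0:ℝ) < (2:ℝ) ^ (-η) := Real.rpow_pos_of_pos (by norm_num) _
  refine ⟨n + 1, by omega, ?_⟩
  rw [two_rpow_neg_nat]
  calc ((2:ℝ) ^ (-η)) ^ (n+1) = ((2:ℝ) ^ (-η)) ^ n * ((2:ℝ) ^ (-η)) := by ring
    _ ≤ ((2:ℝ) ^ (-η)) ^ n * 1 := by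
        apply mul_le_mul_of_nonneg_left (le_of_lt (two_rpow_neg_lt_one hη)) (by positivity)
    _ ≤ β := by rw [mul_one]; exact le_of_lt hn

end CSCA
namespace CSC
variable {Fq : Type} [Field Fq] [Fintype Fq]

lemma card_filter_deg_le {S : Finset (Polynomial Fq)} (hS : ∀ Q ∈ S, Q.Monic ∧ Irreducible Q)
    (L : ℕ) :
    (S.filter (fun P => P.natDegree < L)).card ≤ ∑ e ∈ Finset.range L, Fintype.card Fq ^ e := by
  calc (S.filter (fun P => P.natDegree < L)).card
      ≤ ((Finset.range L).biUnion (fun e => Mon Fq e)).card := by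
        apply Finset.card_le_card
        intro P hP
        rw [Finset.mem_filter] at hP
        rw [Finset.mem_biUnion]
        exact ⟨P.natDegree, Finset.mem_range.mpr hP.2, mem_Mon.mpr ⟨(hS P hP.1).1, rfl⟩⟩
    _ ≤ ∑ e ∈ Finset.range L, (Mon Fq e).card := Finset.card_biUnion_le
    _ = ∑ e ∈ Finset.range L, Fintype.card Fq ^ e := by
        refine Finset.sum_congr rfl fun e _ => card_Mon e

set_option maxHeartbeats 1000000 in
theorem GS_le {ε η : ℝ} (hε : 0 < ε) (hη0 : 0 < η) {L : ℕ} (hL1 : 1 ≤ L)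
    (hL : (2:ℝ) ^ (-(η * L)) ≤ min (ε * Real.log 2) 1 / 2)
    (hq2 : 2 ≤ Fintype.card Fq)
    (S : Finset (Polynomial Fq)) (hS : ∀ Q ∈ S, Q.Monic ∧ Irreducible Q)
    (m : ℕ) (hm : ∑ P ∈ S, P.natDegree ≤ m) :
    GS (Fintype.card Fq : ℝ) η S ≤
      ((1 - (2:ℝ) ^ (-η))⁻¹) ^ (L * (2 ^ L) ^ L) * (Fintype.card Fq : ℝ) ^ (ε * m) := by
  classical
  set q : ℝ := (Fintype.card Fq : ℝ) with hqdef
  have hq : 2 ≤ q := by rw [hqdef]; exact_mod_cast hq2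
  have hq0 : (0:ℝ) < q := q_pos hq
  have hq1 : (1:ℝ) < q := q_one_lt hq
  set β : ℝ := min (ε * Real.log 2) 1 / 2 with hβdef
  have hlog2 : (0:ℝ) < Real.log 2 := Real.log_pos one_lt_two
  have hβpos : 0 < β := by
    apply div_pos _ (by norm_num)
    apply lt_min (by positivity) one_pos
  have hlogq : Real.log 2 ≤ Real.log q := Real.log_le_log (by norm_num) hq
  have hlogq0 : 0 < Real.log q := lt_of_lt_of_le hlog2 hlogq
  -- per-factor bound from smallness of t
  have hfac : ∀ e : ℕ, 1 ≤ e → q ^ (-(η * e)) ≤ β →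
      (1 - q ^ (-(η * e)))⁻¹ ≤ q ^ (ε * e) := by
    intro e he htβ
    apply CSCA.factor_le hq hε he
    · calc q ^ (-(η * e)) ≤ β := htβ
        _ ≤ 1/2 := by
          rw [hβdef]
          have : min (ε * Real.log 2) 1 ≤ 1 := min_le_right _ _
          linarith
    · have h1 : 2 * q ^ (-(η * e)) ≤ 2 * β := by linarith
      have h2 : 2 * β ≤ ε * Real.log 2 := by
        rw [hβdef]
        have : min (ε * Real.log 2) 1 ≤ ε * Real.log 2 := min_le_left _ _
        linarith
      have h3 : ε * Real.log 2 ≤ ε * e * Real.log q := by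
        have he1 : (1:ℝ) ≤ (e:ℝ) := by exact_mod_cast he
        have : ε * Real.log 2 ≤ ε * (e * Real.log q) := by
          apply mul_le_mul_of_nonneg_left _ (le_of_lt hε)
          nlinarith
        linarith [this]
      linarith
  -- the K constant
  have hKfac : (0:ℝ) < (2:ℝ) ^ (-η) := Real.rpow_pos_of_pos (by norm_num) _
  have hK2 : (2:ℝ) ^ (-η) < 1 := CSCA.two_rpow_neg_lt_one hη0
  set K : ℝ := (1 - (2:ℝ) ^ (-η))⁻¹ with hKdef
  have hK1 : 1 ≤ K := by
    rw [hKdef, le_inv_comm₀ one_pos (by linarith)]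
    linarith
  -- any factor is at most K
  have hfacK : ∀ e : ℕ, 1 ≤ e → (1 - q ^ (-(η * e)))⁻¹ ≤ K := by
    intro e he
    have he1 : (1:ℝ) ≤ (e:ℝ) := by exact_mod_cast he
    have ht1 : q ^ (-(η * e)) ≤ (2:ℝ) ^ (-(η * e)) :=
      CSCA.rpow_base_le (by norm_num) hq (by nlinarith)
    have ht2 : (2:ℝ) ^ (-(η * e)) ≤ (2:ℝ) ^ (-η) := by
      apply Real.rpow_le_rpow_of_exponent_le one_le_two
      nlinarith
    have ht0 : (0:ℝ) < q ^ (-(η * e)) := Real.rpow_pos_of_pos hq0 _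
    rw [hKdef]
    apply inv_anti₀ (by linarith)
    linarith
  -- large-degree factors satisfy the rpow bound
  have hlarge : ∀ e : ℕ, L ≤ e → (1 - q ^ (-(η * e)))⁻¹ ≤ q ^ (ε * e) := by
    intro e he
    have he1 : 1 ≤ e := le_trans hL1 he
    apply hfac e he1
    have h1 : q ^ (-(η * e)) ≤ (2:ℝ) ^ (-(η * e)) :=
      CSCA.rpow_base_le (by norm_num) hq
        (by nlinarith [show (1:ℝ) ≤ (e:ℝ) by exact_mod_cast he1])
    have h2 : (2:ℝ) ^ (-(η * e)) ≤ (2:ℝ) ^ (-(η * L)) := by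
      apply Real.rpow_le_rpow_of_exponent_le one_le_two
      have : (L:ℝ) ≤ (e:ℝ) := by exact_mod_cast he
      nlinarith
    linarith
  -- the product over any subset with degree sum ≤ m of q^(ε deg) is ≤ q^(ε m)
  have hprodpow : ∀ T : Finset (Polynomial Fq), T ⊆ S →
      ∏ P ∈ T, q ^ (ε * P.natDegree) ≤ q ^ (ε * m) := by
    intro T hT
    have hsum : ∑ P ∈ T, (P.natDegree : ℝ) ≤ (m:ℝ) := by
      have h1 : ∑ P ∈ T, P.natDegree ≤ ∑ P ∈ S, P.natDegree :=
        Finset.sum_le_sum_of_subset hT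
      exact_mod_cast le_trans h1 hm
    calc ∏ P ∈ T, q ^ (ε * P.natDegree)
        = q ^ (∑ P ∈ T, ε * P.natDegree) := (Real.rpow_sum_of_pos hq0 _ _).symm
      _ ≤ q ^ (ε * m) := by
        apply rpow_mono hq
        rw [← Finset.mul_sum]
        apply mul_le_mul_of_nonneg_left hsum (le_of_lt hε)
  rcases le_or_gt ((2:ℝ) ^ L) q with hcase | hcase
  · -- big q: all factors small
    have hall : ∀ P ∈ S, (1 - q ^ (-(η * P.natDegree)))⁻¹ ≤ q ^ (ε * P.natDegree) := by
      intro P hP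
      have he1 : 1 ≤ P.natDegree := irred_natDegree_pos (hS P hP).2
      apply hfac _ he1
      have he1' : (1:ℝ) ≤ (P.natDegree : ℝ) := by exact_mod_cast he1
      have h1 : q ^ (-(η * P.natDegree)) ≤ q ^ (-η) := by
        apply Real.rpow_le_rpow_of_exponent_le (le_of_lt hq1)
        nlinarith
      have h2 : q ^ (-η) ≤ ((2:ℝ) ^ L) ^ (-η) := by
        apply CSCA.rpow_base_le (by positivity) hcase (by linarith)
      have h3 : ((2:ℝ) ^ L) ^ (-η) = (2:ℝ) ^ (-(η * L)) := by
        rw [← Real.rpow_natCast (2:ℝ) L, ← Real.rpow_mul (by norm_num)]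
        congr 1
        ring
      linarith [hL]
    have hbound : GS q η S ≤ ∏ P ∈ S, q ^ (ε * P.natDegree) := by
      rw [GS]
      apply Finset.prod_le_prod
      · intro P hP
        have := GS_factor_ge_one hq hη0 (irred_natDegree_pos (hS P hP).2)
        linarith
      · exact hall
    have h2 : (1:ℝ) ≤ K ^ (L * (2 ^ L) ^ L) := one_le_pow₀ hK1
    have h3 : (0:ℝ) < q ^ (ε * m) := Real.rpow_pos_of_pos hq0 _
    calc GS q η S ≤ ∏ P ∈ S, q ^ (ε * P.natDegree) := hbound
      _ ≤ q ^ (ε * m) := hprodpow S Finset.Subset.rfl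
      _ ≤ K ^ (L * (2 ^ L) ^ L) * q ^ (ε * m) := by nlinarith
  · -- small q: split
    set Ssm := S.filter (fun P => P.natDegree < L) with hSsm
    set Slg := S.filter (fun P => ¬ P.natDegree < L) with hSlg
    have hsplit : GS q η S = (∏ P ∈ Ssm, (1 - q ^ (-(η * P.natDegree)))⁻¹) *
        (∏ P ∈ Slg, (1 - q ^ (-(η * P.natDegree)))⁻¹) := by
      rw [GS, hSsm, hSlg, Finset.prod_filter_mul_prod_filter_not]
    -- card of Ssm
    have hqL : Fintype.card Fq ≤ 2 ^ L := by
      by_contra hcon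
      push_neg at hcon
      have h2 : ((2:ℕ) ^ L : ℝ) ≤ (Fintype.card Fq : ℝ) := by exact_mod_cast le_of_lt hcon
      push_cast at h2
      rw [← hqdef] at h2
      linarith
    have hcard : Ssm.card ≤ L * (2 ^ L) ^ L := by
      calc Ssm.card ≤ ∑ e ∈ Finset.range L, Fintype.card Fq ^ e :=
            card_filter_deg_le hS L
        _ ≤ ∑ _e ∈ Finset.range L, (2 ^ L) ^ L := by
            apply Finset.sum_le_sum
            intro e he
            calc Fintype.card Fq ^ e ≤ (2 ^ L) ^ e := Nat.pow_le_pow_left hqL e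
              _ ≤ (2 ^ L) ^ L := Nat.pow_le_pow_right (by positivity)
                  (le_of_lt (Finset.mem_range.mp he))
        _ = L * (2 ^ L) ^ L := by
            rw [Finset.sum_const, Finset.card_range, smul_eq_mul]
    have hsm : ∏ P ∈ Ssm, (1 - q ^ (-(η * P.natDegree)))⁻¹ ≤ K ^ (L * (2 ^ L) ^ L) := by
      calc ∏ P ∈ Ssm, (1 - q ^ (-(η * P.natDegree)))⁻¹ ≤ ∏ _P ∈ Ssm, K := by
            apply Finset.prod_le_prod
            · intro P hP
              have := GS_factor_ge_one hq hη0
                (irred_natDegree_pos (hS P (Finset.mem_filter.mp hP).1).2)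
              linarith
            · intro P hP
              exact hfacK _ (irred_natDegree_pos (hS P (Finset.mem_filter.mp hP).1).2)
        _ = K ^ Ssm.card := by rw [Finset.prod_const]
        _ ≤ K ^ (L * (2 ^ L) ^ L) := pow_le_pow_right₀ hK1 hcard
    have hlg : ∏ P ∈ Slg, (1 - q ^ (-(η * P.natDegree)))⁻¹ ≤ q ^ (ε * m) := by
      calc ∏ P ∈ Slg, (1 - q ^ (-(η * P.natDegree)))⁻¹
          ≤ ∏ P ∈ Slg, q ^ (ε * P.natDegree) := by
            apply Finset.prod_le_prod
            · intro P hP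
              have := GS_factor_ge_one hq hη0
                (irred_natDegree_pos (hS P (Finset.mem_filter.mp hP).1).2)
              linarith
            · intro P hP
              have hge : L ≤ P.natDegree := by
                have := (Finset.mem_filter.mp hP).2
                omega
              exact hlarge _ hge
        _ ≤ q ^ (ε * m) := hprodpow Slg (Finset.filter_subset _ _)
    have hsm0 : 0 < ∏ P ∈ Ssm, (1 - q ^ (-(η * P.natDegree)))⁻¹ := by
      apply Finset.prod_pos
      intro P hP
      have h1 := tP_lt_one hq hη0 (irred_natDegree_pos (hS P (Finset.mem_filter.mp hP).1).2)
      have h2 := tP_pos hq (-(η * (P.natDegree:ℕ)))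
      rw [inv_pos]; linarith
    have hlg0 : 0 < ∏ P ∈ Slg, (1 - q ^ (-(η * P.natDegree)))⁻¹ := by
      apply Finset.prod_pos
      intro P hP
      have h1 := tP_lt_one hq hη0 (irred_natDegree_pos (hS P (Finset.mem_filter.mp hP).1).2)
      have h2 := tP_pos hq (-(η * (P.natDegree:ℕ)))
      rw [inv_pos]; linarith
    rw [hsplit]
    apply mul_le_mul hsm hlg (le_of_lt hlg0)
    exact le_trans zero_le_one (one_le_pow₀ hK1)

end CSC
namespace CSC
variable {Fq : Type} [Field Fq] [Fintype Fq]

/-- The monic irreducible divisors of `f`, as a finset. -/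
def Sf (f : Polynomial Fq) : Finset (Polynomial Fq) :=
  ((Finset.range (f.natDegree + 1)).biUnion (fun e => Mon Fq e)).filter
    (fun P => Irreducible P ∧ P ∣ f)

lemma mem_Sf {f P : Polynomial Fq} (hf : f.Monic) :
    P ∈ Sf f ↔ P.Monic ∧ Irreducible P ∧ P ∣ f := by
  rw [Sf, Finset.mem_filter, Finset.mem_biUnion]
  constructor
  · rintro ⟨⟨e, he, hP⟩, h2⟩
    exact ⟨(mem_Mon.mp hP).1, h2⟩
  · rintro ⟨h1, h2, h3⟩
    refine ⟨⟨P.natDegree, ?_, mem_Mon.mpr ⟨h1, rfl⟩⟩, h2, h3⟩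
    rw [Finset.mem_range]
    have := Polynomial.natDegree_le_of_dvd h3 hf.ne_zero
    omega

lemma Sf_irred {f : Polynomial Fq} (hf : f.Monic) :
    ∀ Q ∈ Sf f, Q.Monic ∧ Irreducible Q := by
  intro Q hQ
  have := (mem_Sf hf).mp hQ
  exact ⟨this.1, this.2.1⟩

lemma coprime_iff_avoid {f F : Polynomial Fq} (hf : f.Monic) :
    IsCoprime F f ↔ ∀ P ∈ Sf f, ¬ P ∣ F := by
  constructor
  · intro hc P hP hdvd
    rw [mem_Sf hf] at hP
    exact hP.2.1.not_isUnit (hc.isUnit_of_dvd' hdvd hP.2.2)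
  · intro h
    by_contra hnc
    rw [← EuclideanDomain.gcd_isUnit_iff] at hnc
    have hg0 : EuclideanDomain.gcd F f ≠ 0 := by
      intro h0
      exact hf.ne_zero (EuclideanDomain.gcd_eq_zero_iff.mp h0).2
    obtain ⟨p, hpirr, hpd⟩ := WfDvdMonoid.exists_irreducible_factor hnc hg0
    have hu : IsUnit (C p.leadingCoeff⁻¹) :=
      isUnit_C.mpr (isUnit_iff_ne_zero.mpr (inv_ne_zero (leadingCoeff_ne_zero.mpr hpirr.ne_zero)))
    have hPm : (p * C p.leadingCoeff⁻¹).Monic := monic_mul_leadingCoeff_inv hpirr.ne_zero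
    have hPirr : Irreducible (p * C p.leadingCoeff⁻¹) := (irreducible_mul_isUnit hu).mpr hpirr
    have hPd : (p * C p.leadingCoeff⁻¹) ∣ EuclideanDomain.gcd F f :=
      ((associated_mul_unit_right p _ hu).symm.dvd).trans hpd
    exact h _ ((mem_Sf hf).mpr ⟨hPm, hPirr, hPd.trans (EuclideanDomain.gcd_dvd_right F f)⟩)
      (hPd.trans (EuclideanDomain.gcd_dvd_left F f))

lemma count_eq {f : Polynomial Fq} (hf : f.Monic) (d : ℕ) :
    ((Finset.univ : Finset (Fin d → Fq)).filter
        (fun c => Squarefree (monicOf d c) ∧ IsCoprime (monicOf d c) f)).card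
      = (NS (Sf f) d).card := by
  rw [← Finset.card_image_of_injective _ (monicOf_injective (Fq := Fq) d)]
  congr 1
  ext F
  simp only [Finset.mem_image, Finset.mem_filter, Finset.mem_univ, true_and, NS, mem_Mon]
  constructor
  · rintro ⟨c, ⟨hsf, hcop⟩, rfl⟩
    exact ⟨⟨monicOf_monic d c, monicOf_natDegree d c⟩, hsf, (coprime_iff_avoid hf).mp hcop⟩
  · rintro ⟨⟨hm, hdeg⟩, hsf, hav⟩
    refine ⟨fun i => F.coeff i, ?_, (eq_monicOf_of_monic hm hdeg).symm⟩
    have hF : monicOf d (fun i => F.coeff i) = F := (eq_monicOf_of_monic hm hdeg).symm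
    rw [hF]
    exact ⟨hsf, (coprime_iff_avoid hf).mpr hav⟩

lemma tprod_eq {f : Polynomial Fq} (hf : f.Monic) (g : Polynomial Fq → ℝ) :
    (∏' P : {P : Polynomial Fq // P.Monic ∧ Irreducible P ∧ P ∣ f}, g P.1)
      = ∏ P ∈ Sf f, g P := by
  letI : Fintype {P : Polynomial Fq // P.Monic ∧ Irreducible P ∧ P ∣ f} :=
    Fintype.subtype (Sf f) (fun P => mem_Sf hf)
  rw [tprod_fintype]
  exact (Finset.prod_subtype (Sf f) (fun P => mem_Sf hf) g).symm

lemma degsum_le {f : Polynomial Fq} (hf : f.Monic) :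
    ∑ P ∈ Sf f, P.natDegree ≤ f.natDegree := by
  have hdvd : ∏ P ∈ Sf f, P ∣ f := by
    apply Finset.prod_dvd_of_coprime
    · intro P hP Q hQ hne
      simp only [Finset.mem_coe] at hP hQ
      have hPI := (mem_Sf hf).mp hP
      have hQI := (mem_Sf hf).mp hQ
      refine (hPI.2.1.coprime_iff_not_dvd).mpr ?_
      intro hdvd
      exact hne (monic_irred_dvd_irred hPI.1 hPI.2.1 hQI.1 hQI.2.1 hdvd)
    · intro P hP
      exact ((mem_Sf hf).mp hP).2.2
  have h1 := Polynomial.natDegree_le_of_dvd hdvd hf.ne_zero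
  rwa [Polynomial.natDegree_prod _ _ (fun P hP => ((mem_Sf hf).mp hP).2.1.ne_zero)] at h1

end CSC

/-- **Equation (3.4).** The number of squarefree monic `F` of degree `d ≥ 1` coprime to a
fixed monic `f` is `∏_{P | f} (1 + 1/|P|)⁻¹ · |𝓗(d)| + O_ε(|f|^ε q^{εd})`, where
`|𝓗(d)| = q^d - q^{d-1}`, with implied constant depending only on `ε`. -/
theorem count_squarefree_coprime (ε : ℝ) (hε : 0 < ε) :
    ∃ C : ℝ, 0 < C ∧
      ∀ (q : ℕ) (Fq : Type) [Field Fq] [Fintype Fq],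
        IsPrimePow q → Fintype.card Fq = q →
        ∀ f : Polynomial Fq, f.Monic →
          ∀ d : ℕ, 1 ≤ d →
            |((((Finset.univ : Finset (Fin d → Fq)).filter
                  (fun c => Squarefree (monicOf d c) ∧ IsCoprime (monicOf d c) f)).card : ℝ) -
                (∏' P : {P : Polynomial Fq // P.Monic ∧ Irreducible P ∧ P ∣ f},
                    (1 + ((q : ℝ) ^ P.1.natDegree)⁻¹)⁻¹) *
                  ((q : ℝ) ^ d - (q : ℝ) ^ (d - 1)))| ≤
              C * (q : ℝ) ^ (ε * (f.natDegree : ℝ)) * (q : ℝ) ^ (ε * (d : ℝ)) := by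
    classical
  open CSC CSCA in
  set η : ℝ := min ε 1 with hηdef
  have hη0 : 0 < η := lt_min hε one_pos
  have hη1 : η ≤ 1 := min_le_right _ _
  have hηε : η ≤ ε := min_le_left _ _
  have hβpos : (0:ℝ) < min (ε * Real.log 2) 1 / 2 := by
    have := Real.log_pos (by norm_num : (1:ℝ) < 2)
    apply div_pos (lt_min (by positivity) one_pos) (by norm_num)
  obtain ⟨L, hL1, hL⟩ := CSCA.exists_L hβpos hη0
  set K : ℝ := (1 - (2:ℝ) ^ (-η))⁻¹ with hKdef
  have hK1 : 1 ≤ K := by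
    have h2 : (2:ℝ) ^ (-η) < 1 := CSCA.two_rpow_neg_lt_one hη0
    have h0 : (0:ℝ) < (2:ℝ) ^ (-η) := Real.rpow_pos_of_pos (by norm_num) _
    rw [hKdef, le_inv_comm₀ one_pos (by linarith)]
    linarith
  refine ⟨K ^ (L * (2 ^ L) ^ L), lt_of_lt_of_le one_pos (one_le_pow₀ hK1), ?_⟩
  intro q Fq _ _ hpp hcard f hf d hd
  have hq2 : 2 ≤ q := by rw [← hcard]; exact Fintype.one_lt_card
  have hqR : (2:ℝ) ≤ (q:ℝ) := by exact_mod_cast hq2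
  have hqcast : (q:ℝ) = (Fintype.card Fq : ℝ) := by rw [hcard]
  have hcount := CSC.count_eq (Fq := Fq) hf d
  have hNZ : CSC.NZ (CSC.Sf f) (d : ℤ) = (CSC.NS (CSC.Sf f) d).card := by
    rw [CSC.NZ, if_pos (Int.natCast_nonneg d)]
    simp
  have hz1 : ((q:ℝ)) ^ ((d:ℤ)) = (q:ℝ) ^ d := zpow_natCast _ d
  have hz2 : ((q:ℝ)) ^ ((d:ℤ) - 1) = (q:ℝ) ^ (d - 1) := by
    rw [show (d:ℤ) - 1 = ((d - 1 : ℕ) : ℤ) by omega, zpow_natCast]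
  have hMT : CSC.MT (q:ℝ) (CSC.Sf f) (d:ℤ) =
      (∏' P : {P : Polynomial Fq // P.Monic ∧ Irreducible P ∧ P ∣ f},
        (1 + ((q:ℝ) ^ P.1.natDegree)⁻¹)⁻¹) * ((q : ℝ) ^ d - (q : ℝ) ^ (d - 1)) := by
    rw [CSC.MT, CSC.tprod_eq hf (fun P => (1 + ((q:ℝ) ^ P.natDegree)⁻¹)⁻¹), hz1, hz2, mul_comm]
  have hkey := CSC.key_bound (q := (q:ℝ)) hqR hη0 hη1 hqcast (CSC.Sf f) (CSC.Sf_irred hf) (d : ℤ)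
  have hGS := CSC.GS_le (Fq := Fq) hε hη0 hL1 hL (by omega : 2 ≤ Fintype.card Fq) (CSC.Sf f) (CSC.Sf_irred hf)
    f.natDegree (CSC.degsum_le hf)
  rw [← hqcast, ← hKdef] at hGS
  rw [hcount, ← hNZ, ← hMT]
  have h1 : ((q:ℝ)) ^ (η * (((d:ℤ)):ℝ)) ≤ (q:ℝ) ^ (ε * (d:ℝ)) := by
    apply CSC.rpow_mono hqR
    push_cast
    have hd0 : (0:ℝ) ≤ (d:ℝ) := Nat.cast_nonneg d
    nlinarith
  have hGS0 : 0 ≤ CSC.GS (q:ℝ) η (CSC.Sf f) := by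
    have := CSC.one_le_GS hqR hη0 (CSC.Sf f) (CSC.Sf_irred hf)
    linarith
  have hr0 : (0:ℝ) ≤ (q:ℝ) ^ (η * (((d:ℤ)):ℝ)) :=
    le_of_lt (Real.rpow_pos_of_pos (by linarith) _)
  calc |(↑(CSC.NZ (CSC.Sf f) (d:ℤ)) : ℝ) - CSC.MT (q:ℝ) (CSC.Sf f) (d:ℤ)|
      ≤ (q:ℝ) ^ (η * (((d:ℤ)):ℝ)) * CSC.GS (q:ℝ) η (CSC.Sf f) := hkey
    _ ≤ (q:ℝ) ^ (ε * (d:ℝ)) * (K ^ (L * (2 ^ L) ^ L) * (q:ℝ) ^ (ε * (f.natDegree:ℝ))) :=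
        mul_le_mul h1 hGS hGS0 (le_of_lt (Real.rpow_pos_of_pos (by linarith) _))
    _ = K ^ (L * (2 ^ L) ^ L) * (q:ℝ) ^ (ε * (f.natDegree:ℝ)) * (q:ℝ) ^ (ε * (d:ℝ)) := by
        ring
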